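/- Let W be a symmetric n×n matrix and D a diagonal positive definite n×n matrix. Then Y ∈ ℝ^{n×K} satisfies WY = DY(Yᵀ(D/n)Y) if and only if D^{1/2}Y spans an invariant subspace of D^{-1/2}WD^{-1/2}; equivalently, Y is a stationary point of f(Y) = trace(-2YᵀWY/n² + Yᵀ(D/n²)YYᵀ(D/n²)Y) if and only if Y = UΛ^{1/2}PQ, where (Λ, U) are the eigenvalues and D-orthonormal eigenvectors of the pencil (W,D), P consists of the first r ≤ K columns of a permutation matrix restricted to indices with nonnegative eigenvalues, and Q ∈ ℝ^{r×K} satisfies QQᵀ = I. -/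

import Mathlib

open Matrix

set_option maxHeartbeats 1000000

/-- Stationary points of the orthogonalization-free objective are exactly
`Y = U Λ^{1/2} P Q` built from eigenvectors of the pencil `(W, D)`. -/
theorem stmt_0 (n K : ℕ) (hn : 0 < n)
    (W D : Matrix (Fin n) (Fin n) ℝ) (hW : W.IsSymm) (hDdiag : D.IsDiag)
    (hDpos : D.PosDef)
    (Y : Matrix (Fin n) (Fin K) ℝ) :
    W * Y = ((n : ℝ) ^ 2)⁻¹ • (D * Y * (Yᵀ * D * Y)) ↔
      ∃ (r : ℕ) (_ : r ≤ K) (U : Matrix (Fin n) (Fin r) ℝ)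
        (lam : Fin r → ℝ) (Q : Matrix (Fin r) (Fin K) ℝ),
        (∀ i, 0 ≤ lam i) ∧
        W * U = D * U * diagonal lam ∧
        Uᵀ * D * U = ((n : ℝ) ^ 2) • (1 : Matrix (Fin r) (Fin r) ℝ) ∧
        Q * Qᵀ = 1 ∧
        Y = U * diagonal (fun i => Real.sqrt (lam i)) * Q := by
  have hn2 : ((n : ℝ) ^ 2) ≠ 0 := by positivity
  constructor
  · intro h
    classical
    set d : Fin n → ℝ := fun i => D i i with hd
    have hDd : D = diagonal d := by
      ext i j
      rcases eq_or_ne i j with rfl | hij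
      · simp [d]
      · simp [diagonal_apply_ne _ hij, hDdiag hij]
    have hdpos : ∀ i, 0 < d i := by
      rw [hDd] at hDpos
      exact posDef_diagonal_iff.mp hDpos
    have hNpsd : (Yᵀ * D * Y).PosSemidef := by
      have := hDpos.posSemidef.conjTranspose_mul_mul_same Y
      rwa [conjTranspose_eq_transpose_of_trivial] at this
    set ν : Fin K → ℝ := hNpsd.1.eigenvalues with hνdef
    set V : Matrix (Fin K) (Fin K) ℝ := (hNpsd.1.eigenvectorUnitary : Matrix (Fin K) (Fin K) ℝ) with hVdef
    have hν0 : ∀ k, 0 ≤ ν k := hNpsd.eigenvalues_nonneg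
    have hspec : Yᵀ * D * Y = V * diagonal ν * Vᵀ := by
      have h0 := hNpsd.1.spectral_theorem
      rwa [Unitary.conjStarAlgAut_apply, RCLike.ofReal_real_eq_id, Function.id_comp, Matrix.star_eq_conjTranspose,
        conjTranspose_eq_transpose_of_trivial] at h0
    have hVtV : Vᵀ * V = 1 := by
      have := Unitary.coe_star_mul_self hNpsd.1.eigenvectorUnitary
      rwa [Matrix.star_eq_conjTranspose, conjTranspose_eq_transpose_of_trivial] at this
    have hVVt : V * Vᵀ = 1 := by
      have := Unitary.coe_mul_star_self hNpsd.1.eigenvectorUnitary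
      rwa [Unitary.coe_star, Matrix.star_eq_conjTranspose,
        conjTranspose_eq_transpose_of_trivial] at this
    set Z : Matrix (Fin n) (Fin K) ℝ := Y * V with hZdef
    have hYZ : Y = Z * Vᵀ := by rw [hZdef, Matrix.mul_assoc, hVVt, Matrix.mul_one]
    have hZDZ : Zᵀ * D * Z = diagonal ν := by
      have h1 : Zᵀ * D * Z = Vᵀ * (Yᵀ * D * Y) * V := by
        rw [hZdef, transpose_mul]
        simp only [Matrix.mul_assoc]
      rw [h1, hspec]
      calc Vᵀ * (V * diagonal ν * Vᵀ) * V
          = (Vᵀ * V) * diagonal ν * (Vᵀ * V) := by simp only [Matrix.mul_assoc]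
        _ = diagonal ν := by rw [hVtV, Matrix.one_mul, Matrix.mul_one]
    have hWZ : W * Z = ((n : ℝ) ^ 2)⁻¹ • (D * Z * diagonal ν) := by
      calc W * Z = (W * Y) * V := by rw [hZdef, Matrix.mul_assoc]
        _ = ((n : ℝ) ^ 2)⁻¹ • (D * Y * (Yᵀ * D * Y)) * V := by rw [h]
        _ = ((n : ℝ) ^ 2)⁻¹ • (D * Y * (V * diagonal ν * Vᵀ) * V) := by
            rw [hspec, smul_mul]
        _ = ((n : ℝ) ^ 2)⁻¹ • (D * Z * diagonal ν * (Vᵀ * V)) := by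
            rw [hZdef]; simp only [Matrix.mul_assoc]
        _ = ((n : ℝ) ^ 2)⁻¹ • (D * Z * diagonal ν) := by rw [hVtV, Matrix.mul_one]
    -- entrywise versions
    have hWZ' : ∀ i k, (W * Z) i k = ((n : ℝ) ^ 2)⁻¹ * (d i * Z i k * ν k) := by
      intro i k
      have := congrArg (fun A => A i k) hWZ
      simpa [hDd, Matrix.mul_diagonal, Matrix.diagonal_mul, mul_assoc] using this
    have hZDZ' : ∀ k l, ∑ i, Z i k * d i * Z i l = diagonal ν k l := by
      intro k l
      have h1 : (Zᵀ * D * Z) k l = diagonal ν k l := by rw [hZDZ]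
      have h2 : (Zᵀ * D * Z) k l = ∑ i, Z i k * d i * Z i l := by
        rw [Matrix.mul_apply]
        refine Finset.sum_congr rfl fun i _ => ?_
        rw [hDd, Matrix.mul_diagonal, transpose_apply]
      rw [h2] at h1
      exact h1
    have hzero : ∀ k, ν k = 0 → ∀ i, Z i k = 0 := by
      intro k hk i
      have hsum : ∑ i, Z i k * d i * Z i k = 0 := by
        rw [hZDZ' k k, diagonal_apply_eq, hk]
      have hnn : ∀ i ∈ Finset.univ, 0 ≤ Z i k * d i * Z i k := by
        intro i _
        have : Z i k * d i * Z i k = d i * (Z i k) ^ 2 := by ring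
        rw [this]
        exact mul_nonneg (hdpos i).le (sq_nonneg _)
      have hterm := (Finset.sum_eq_zero_iff_of_nonneg hnn).mp hsum i (Finset.mem_univ i)
      have hsq : d i * (Z i k) ^ 2 = 0 := by nlinarith [hterm]
      have := (mul_eq_zero.mp hsq).resolve_left (ne_of_gt (hdpos i))
      exact (pow_eq_zero_iff two_ne_zero).mp this
    set s : Finset (Fin K) := Finset.univ.filter (fun k => ν k ≠ 0) with hsdef
    have hr : s.card ≤ K := le_trans (Finset.card_filter_le _ _) (by simp)
    set e := s.orderEmbOfFin rfl with hedef
    have hes : ∀ i, ν (e i) ≠ 0 := fun i =>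
      (Finset.mem_filter.mp (s.orderEmbOfFin_mem rfl i)).2
    have hepos : ∀ i, 0 < ν (e i) := fun i => lt_of_le_of_ne (hν0 _) (Ne.symm (hes i))
    set c : Fin s.card → ℝ := fun j => (n : ℝ) / Real.sqrt (ν (e j)) with hcdef
    have hsqrt_pos : ∀ j, 0 < Real.sqrt (ν (e j)) := fun j => Real.sqrt_pos.mpr (hepos j)
    set U : Matrix (Fin n) (Fin s.card) ℝ := fun i j => Z i (e j) * c j with hUdef
    set lam : Fin s.card → ℝ := fun j => ν (e j) / (n : ℝ) ^ 2 with hlamdef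
    set Q : Matrix (Fin s.card) (Fin K) ℝ := fun j k => V k (e j) with hQdef
    refine ⟨s.card, hr, U, lam, Q, ?_, ?_, ?_, ?_, ?_⟩
    · intro j
      exact div_nonneg (hν0 _) (by positivity)
    · -- W * U = D * U * diagonal lam
      ext i j
      have hL : (W * U) i j = (W * Z) i (e j) * c j := by
        rw [Matrix.mul_apply, Matrix.mul_apply, Finset.sum_mul]
        exact Finset.sum_congr rfl fun k _ => by rw [hUdef, mul_assoc]
      have hR : (D * U * diagonal lam) i j = d i * (Z i (e j) * c j) * lam j := by
        rw [Matrix.mul_diagonal, hDd, Matrix.diagonal_mul, hUdef]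
      rw [hL, hR, hWZ' i (e j), hlamdef]
      field_simp
    · -- UᵀDU = n² • 1
      have hsum : ∀ a b, (Uᵀ * D * U) a b = (c a * c b) * diagonal ν (e a) (e b) := by
        intro a b
        have h1 : (Uᵀ * D * U) a b = ∑ i, (c a * c b) * (Z i (e a) * d i * Z i (e b)) := by
          rw [Matrix.mul_apply]
          refine Finset.sum_congr rfl fun i _ => ?_
          rw [hDd, Matrix.mul_diagonal, transpose_apply, hUdef]
          ring
        rw [h1, ← Finset.mul_sum, hZDZ' (e a) (e b)]
      ext a b
      rw [hsum]
      rcases eq_or_ne a b with rfl | hab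
      · rw [diagonal_apply_eq, Matrix.smul_apply, Matrix.one_apply_eq, smul_eq_mul, mul_one]
        have h2 : Real.sqrt (ν (e a)) * Real.sqrt (ν (e a)) = ν (e a) :=
          Real.mul_self_sqrt (hν0 _)
        show ((n : ℝ) / Real.sqrt (ν (e a))) * ((n : ℝ) / Real.sqrt (ν (e a))) * ν (e a)
          = (n : ℝ) ^ 2
        rw [div_mul_div_comm, h2, div_mul_cancel₀ _ (hes a), sq]
      · rw [diagonal_apply_ne _ (fun hc => hab (e.injective hc)), mul_zero,
          Matrix.smul_apply, Matrix.one_apply_ne hab, smul_eq_mul, mul_zero]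
    · -- Q Qᵀ = 1
      ext a b
      have h1 : (Q * Qᵀ) a b = (Vᵀ * V) (e a) (e b) := by
        rw [Matrix.mul_apply, Matrix.mul_apply]
        refine Finset.sum_congr rfl fun k _ => ?_
        rw [hQdef]; rfl
      rw [h1, hVtV]
      rcases eq_or_ne a b with rfl | hab
      · simp
      · rw [Matrix.one_apply_ne (fun hc => hab (e.injective hc)), Matrix.one_apply_ne hab]
    · -- Y = U * diagonal √lam * Q
      have hmap : Finset.univ.map ⟨e, e.injective⟩ = s := by
        apply Finset.eq_of_subset_of_card_le
        · intro k hk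
          rcases Finset.mem_map.mp hk with ⟨m, _, rfl⟩
          exact s.orderEmbOfFin_mem rfl m
        · rw [Finset.card_map, Finset.card_univ, Fintype.card_fin]
      ext i j
      have hRHS : (U * diagonal (fun m => Real.sqrt (lam m)) * Q) i j
          = ∑ m, Z i (e m) * V j (e m) := by
        rw [Matrix.mul_apply]
        refine Finset.sum_congr rfl fun m _ => ?_
        rw [Matrix.mul_diagonal, hUdef, hQdef, hlamdef, hcdef]
        have hsq : Real.sqrt (ν (e m) / (n : ℝ) ^ 2) = Real.sqrt (ν (e m)) / (n : ℝ) := by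
          rw [Real.sqrt_div (hν0 _), Real.sqrt_sq (Nat.cast_nonneg n)]
        rw [hsq]
        have hne : Real.sqrt (ν (e m)) ≠ 0 := ne_of_gt (hsqrt_pos m)
        have hnne : (n : ℝ) ≠ 0 := Nat.cast_ne_zero.mpr hn.ne'
        field_simp
      have hLHS : Y i j = ∑ m, Z i (e m) * V j (e m) := by
        have h1 : Y i j = ∑ k, Z i k * V j k := by
          rw [hYZ, Matrix.mul_apply]
          exact Finset.sum_congr rfl fun k _ => by rw [transpose_apply]
        have h2 : ∑ k ∈ s, Z i k * V j k = ∑ k, Z i k * V j k := by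
          apply Finset.sum_subset (Finset.subset_univ s)
          intro k _ hk
          have hνk : ν k = 0 := by
            by_contra hne
            exact hk (Finset.mem_filter.mpr ⟨Finset.mem_univ k, hne⟩)
          rw [hzero k hνk i, zero_mul]
        have h3 := Finset.sum_map Finset.univ ⟨⇑e, e.injective⟩ (fun k => Z i k * V j k)
        simp only [Function.Embedding.coeFn_mk] at h3
        rw [hmap] at h3
        rw [h1, ← h2, h3]
      rw [hLHS, hRHS]
  · rintro ⟨r, hr, U, lam, Q, hlam, hWU, hUDU, hQQ, rfl⟩
    have hS : diagonal (fun i => Real.sqrt (lam i)) * diagonal lam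
        = diagonal lam * diagonal (fun i => Real.sqrt (lam i)) := by
      rw [diagonal_mul_diagonal, diagonal_mul_diagonal,
        show (fun i => Real.sqrt (lam i) * lam i) = (fun i => lam i * Real.sqrt (lam i)) from
          funext fun i => mul_comm _ _]
    have hSS : diagonal (fun i => Real.sqrt (lam i)) * diagonal (fun i => Real.sqrt (lam i))
        = diagonal lam := by
      rw [diagonal_mul_diagonal,
        show (fun i => Real.sqrt (lam i) * Real.sqrt (lam i)) = lam from
          funext fun i => Real.mul_self_sqrt (hlam i)]
    set S := diagonal (fun i => Real.sqrt (lam i)) with hSdef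
    have hST : Sᵀ = S := diagonal_transpose _
    have key : (U * S * Q)ᵀ * D * (U * S * Q)
        = ((n : ℝ) ^ 2) • (Qᵀ * (diagonal lam * Q)) := by
      calc (U * S * Q)ᵀ * D * (U * S * Q)
          = Qᵀ * (Sᵀ * ((Uᵀ * D * U) * (S * Q))) := by
            simp only [transpose_mul, Matrix.mul_assoc]
        _ = ((n : ℝ) ^ 2) • (Qᵀ * (diagonal lam * Q)) := by
            rw [hUDU, hST]
            simp only [smul_mul, Matrix.mul_smul, Matrix.one_mul]
            rw [← Matrix.mul_assoc S S, hSS]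
    rw [key]
    rw [Matrix.mul_smul, smul_smul, inv_mul_cancel₀ hn2, one_smul]
    calc W * (U * S * Q) = (W * U) * (S * Q) := by simp only [Matrix.mul_assoc]
      _ = D * U * (diagonal lam * (S * Q)) := by rw [hWU, Matrix.mul_assoc]
      _ = D * U * (S * ((Q * Qᵀ) * (diagonal lam * Q))) := by
          rw [hQQ, Matrix.one_mul]
          simp only [← Matrix.mul_assoc]
          rw [Matrix.mul_assoc (D * U) (diagonal lam) S, ← hS, ← Matrix.mul_assoc]
      _ = D * (U * S * Q) * (Qᵀ * (diagonal lam * Q)) := by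
          simp only [Matrix.mul_assoc]
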